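/- The common-knowledge induction rule RC1 is sound with respect to SNMs: let G ⊆ Ag be a finite group and φ, ψ be KBL formulas; if SN' ⊨ φ → E_G(ψ ∧ φ) holds for every social network model SN', then for every social network model SN with SN ⊨ φ one has SN ⊨ C_G ψ, i.e., SN ⊨ E^k_G ψ for every k ≥ 1. -/

import Mathlib

/-- KBL formulas: atomic predicates (predicate symbol applied to terms of the
finite domain, folded into the type `Pred`), connection atoms, action atoms,
negation, conjunction and knowledge modalities. -/
inductive Formula (Ag Pred Conn Act : Type) : Type
  | atom : Pred → Formula Ag Pred Conn Act
  | conn : Conn → Ag → Ag → Formula Ag Pred Conn Act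
  | act  : Act → Ag → Ag → Formula Ag Pred Conn Act
  | neg  : Formula Ag Pred Conn Act → Formula Ag Pred Conn Act
  | and  : Formula Ag Pred Conn Act → Formula Ag Pred Conn Act → Formula Ag Pred Conn Act
  | know : Ag → Formula Ag Pred Conn Act → Formula Ag Pred Conn Act
  deriving DecidableEq

variable {Ag Pred Conn Act : Type}

/-- Material implication, encoded classically. -/
def Formula.imp (φ ψ : Formula Ag Pred Conn Act) : Formula Ag Pred Conn Act :=
  Formula.neg (Formula.and φ (Formula.neg ψ))

/-- Propositional formulas, used to define substitution instances of
propositional tautologies (axiom A1). -/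
inductive PropForm : Type
  | var : ℕ → PropForm
  | neg : PropForm → PropForm
  | and : PropForm → PropForm → PropForm

def PropForm.eval (v : ℕ → Bool) : PropForm → Bool
  | .var n => v n
  | .neg p => !(p.eval v)
  | .and p q => p.eval v && q.eval v

/-- A propositional tautology. -/
def PropForm.Taut (p : PropForm) : Prop := ∀ v, p.eval v = true

def PropForm.subst (σ : ℕ → Formula Ag Pred Conn Act) : PropForm → Formula Ag Pred Conn Act
  | .var n => σ n
  | .neg p => Formula.neg (p.subst σ)
  | .and p q => Formula.and (p.subst σ) (q.subst σ)

/-- A KBL formula that is a substitution instance of a propositional tautology. -/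
def Formula.IsTautInstance (φ : Formula Ag Pred Conn Act) : Prop :=
  ∃ (p : PropForm) (σ : ℕ → Formula Ag Pred Conn Act), p.Taut ∧ p.subst σ = φ

/-- KD4-derivability `Γ ⊢ φ`: assumptions, propositional tautologies (A1),
distribution (A2), positive introspection (A4), consistency (D, with falsum
taken as a contradictory formula `φ ∧ ¬φ`), modus ponens (R1) and
necessitation from the empty set of assumptions (R2). -/
inductive Deriv : Set (Formula Ag Pred Conn Act) → Formula Ag Pred Conn Act → Prop
  | mem {Γ} {φ : Formula Ag Pred Conn Act} : φ ∈ Γ → Deriv Γ φ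
  | taut {Γ} {φ : Formula Ag Pred Conn Act} : φ.IsTautInstance → Deriv Γ φ
  | a2 (Γ) (i : Ag) (φ ψ : Formula Ag Pred Conn Act) :
      Deriv Γ (Formula.imp
        (Formula.and (Formula.know i φ) (Formula.know i (Formula.imp φ ψ)))
        (Formula.know i ψ))
  | a4 (Γ) (i : Ag) (φ : Formula Ag Pred Conn Act) :
      Deriv Γ (Formula.imp (Formula.know i φ) (Formula.know i (Formula.know i φ)))
  | dax (Γ) (i : Ag) (φ : Formula Ag Pred Conn Act) :
      Deriv Γ (Formula.neg (Formula.know i (Formula.and φ (Formula.neg φ))))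
  | mp {Γ} {φ ψ : Formula Ag Pred Conn Act} :
      Deriv Γ (Formula.imp φ ψ) → Deriv Γ φ → Deriv Γ ψ
  | nec (Γ) (i : Ag) {φ : Formula Ag Pred Conn Act} :
      Deriv (∅ : Set (Formula Ag Pred Conn Act)) φ → Deriv Γ (Formula.know i φ)

/-- A social network model: connection relations, permitted-action relations,
a finite knowledge base for every agent, and the environment's knowledge base
(the set of true atomic predicates). -/
structure SNM (Ag Pred Conn Act : Type) where
  conn : Conn → Ag → Ag → Prop
  act : Act → Ag → Ag → Prop
  KB : Ag → Finset (Formula Ag Pred Conn Act)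
  KBe : Finset Pred

/-- Satisfaction of a KBL formula in a social network model. -/
def SNM.Sat (SN : SNM Ag Pred Conn Act) : Formula Ag Pred Conn Act → Prop
  | .atom p => p ∈ SN.KBe
  | .conn m i j => SN.conn m i j
  | .act n i j => SN.act n i j
  | .neg φ => ¬ SN.Sat φ
  | .and φ ψ => SN.Sat φ ∧ SN.Sat ψ
  | .know i φ => Deriv (↑(SN.KB i) : Set (Formula Ag Pred Conn Act)) φ

/-- Knowledge consistency of the knowledge bases of an SNM. -/
def SNM.KnowConsistent (SN : SNM Ag Pred Conn Act) : Prop :=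
  ∀ (i : Ag) (φ : Formula Ag Pred Conn Act),
    Deriv (↑(SN.KB i) : Set (Formula Ag Pred Conn Act)) φ →
    ¬ Deriv (↑(SN.KB i) : Set (Formula Ag Pred Conn Act)) (Formula.neg φ)

/-- Self-awareness of the knowledge bases of an SNM. -/
def SNM.SelfAware (SN : SNM Ag Pred Conn Act) : Prop :=
  ∀ (i : Ag) (φ : Formula Ag Pred Conn Act),
    Deriv (↑(SN.KB i) : Set (Formula Ag Pred Conn Act)) φ →
    Deriv (↑(SN.KB i) : Set (Formula Ag Pred Conn Act)) (Formula.know i φ)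

/-- Conjunction of a nonempty list of formulas (head `a`, tail `l`). -/
def conjNE (a : Formula Ag Pred Conn Act) (l : List (Formula Ag Pred Conn Act)) :
    Formula Ag Pred Conn Act :=
  l.foldl Formula.and a

/-- The characteristic set `Φ_SN` of a social network model. -/
def SNM.CharSet (SN : SNM Ag Pred Conn Act) : Set (Formula Ag Pred Conn Act) :=
  {ψ | ∃ p ∈ SN.KBe, ψ = Formula.atom p} ∪
  {ψ | ∃ (i : Ag) (φ : Formula Ag Pred Conn Act), φ ∈ SN.KB i ∧ ψ = Formula.know i φ} ∪
  {ψ | ∃ (m : Conn) (i j : Ag), SN.conn m i j ∧ ψ = Formula.conn m i j} ∪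
  {ψ | ∃ (n : Act) (i j : Ag), SN.act n i j ∧ ψ = Formula.act n i j}

/-- A formula is KD4-consistent when its negation is not derivable from no
assumptions. -/
def KD4Consistent (φ : Formula Ag Pred Conn Act) : Prop :=
  ¬ Deriv (∅ : Set (Formula Ag Pred Conn Act)) (Formula.neg φ)

/-- A set of formulas is KD4-consistent when no contradiction is derivable from it. -/
def SetKD4Consistent (Γ : Set (Formula Ag Pred Conn Act)) : Prop :=
  ∀ ψ : Formula Ag Pred Conn Act, ¬ (Deriv Γ ψ ∧ Deriv Γ (Formula.neg ψ))

/-- Subformulas of a formula (including the formula itself). -/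
def Formula.sub : Formula Ag Pred Conn Act → Set (Formula Ag Pred Conn Act)
  | .atom p => {Formula.atom p}
  | .conn m i j => {Formula.conn m i j}
  | .act n i j => {Formula.act n i j}
  | .neg φ => insert (Formula.neg φ) φ.sub
  | .and φ ψ => insert (Formula.and φ ψ) (φ.sub ∪ ψ.sub)
  | .know i φ => insert (Formula.know i φ) φ.sub

/-- `Sub⁺(φ)`: subformulas of `φ` together with their negations. -/
def SubPlus (φ : Formula Ag Pred Conn Act) : Set (Formula Ag Pred Conn Act) :=
  φ.sub ∪ (Formula.neg '' φ.sub)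

/-- `Con(φ)` (named `ConKD4`): maximal KD4-consistent subsets of `Sub⁺(φ)`. -/
def ConKD4 (φ : Formula Ag Pred Conn Act) : Set (Set (Formula Ag Pred Conn Act)) :=
  {Θ | Θ ⊆ SubPlus φ ∧ SetKD4Consistent Θ ∧
    ∀ ψ ∈ SubPlus φ, ψ ∉ Θ → ¬ SetKD4Consistent (insert ψ Θ)}

/-- `Θ/K_i = {ψ | K_i ψ ∈ Θ}`. -/
def projK (i : Ag) (Θ : Set (Formula Ag Pred Conn Act)) : Set (Formula Ag Pred Conn Act) :=
  {ψ | Formula.know i ψ ∈ Θ}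

/-- Kripke models: states, a valuation assigning truth values of atomic
formulas at each state, and accessibility relations. -/
structure Kripke (Ag Pred Conn Act : Type) where
  State : Type
  val : State → Formula Ag Pred Conn Act → Prop
  acc : Ag → State → State → Prop

/-- The canonical Kripke model `M_φ` of a (KD4-consistent) formula `φ`. -/
def canonical (φ : Formula Ag Pred Conn Act) : Kripke Ag Pred Conn Act where
  State := {Θ : Set (Formula Ag Pred Conn Act) // Θ ∈ ConKD4 φ}
  val := fun s ψ => ψ ∈ s.1
  acc := fun i s t => projK i s.1 ⊆ projK i t.1 ∧ projK i s.1 ⊆ t.1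

/-- Satisfaction of a formula at a state of a Kripke model. -/
def KSat (M : Kripke Ag Pred Conn Act) : M.State → Formula Ag Pred Conn Act → Prop
  | s, .atom p => M.val s (Formula.atom p)
  | s, .conn m i j => M.val s (Formula.conn m i j)
  | s, .act n i j => M.val s (Formula.act n i j)
  | s, .neg ψ => ¬ KSat M s ψ
  | s, .and ψ χ => KSat M s ψ ∧ KSat M s χ
  | s, .know i ψ => ∀ t, M.acc i s t → KSat M t ψ

/-- Length (number of symbols) of a formula; atoms count as one symbol. -/
def Formula.len : Formula Ag Pred Conn Act → ℕ
  | .atom _ => 1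
  | .conn _ _ _ => 1
  | .act _ _ _ => 1
  | .neg φ => φ.len + 1
  | .and φ ψ => φ.len + ψ.len + 1
  | .know _ φ => φ.len + 1

/-- `outerK(φ)`: the subformulas of `φ` of the form `K_i ψ` that are not under
the scope of any knowledge modality. -/
def outerK : Formula Ag Pred Conn Act → List (Formula Ag Pred Conn Act)
  | .neg φ => outerK φ
  | .and φ ψ => outerK φ ++ outerK ψ
  | .know i φ => [Formula.know i φ]
  | .atom _ => []
  | .conn _ _ _ => []
  | .act _ _ _ => []

/-- The length of the conjunction of the formulas of a list: the lengths of
the conjuncts plus one symbol for each `∧`. -/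
def conjLen (l : List (Formula Ag Pred Conn Act)) : ℕ :=
  (l.map Formula.len).sum + (l.length - 1)

/-- `E_G φ`: everybody in the (nonempty) group `G = {a} ∪ l` knows `φ`,
as the conjunction `⋀_{i ∈ G} K_i φ`. -/
def EG {Ag Pred Conn Act : Type} (a : Ag) (l : List Ag)
    (φ : Formula Ag Pred Conn Act) : Formula Ag Pred Conn Act :=
  (l.map fun i => Formula.know i φ).foldl Formula.and (Formula.know a φ)

/-- `E^k_G φ`: `E⁰_G φ = φ` and `E^{k+1}_G φ = E_G (E^k_G φ)`. -/
def EGiter {Ag Pred Conn Act : Type} (a : Ag) (l : List Ag) :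
    ℕ → Formula Ag Pred Conn Act → Formula Ag Pred Conn Act
  | 0, φ => φ
  | k + 1, φ => EG a l (EGiter a l k φ)

section RC1Aux

variable {Ag Pred Conn Act : Type}

/-- Propositional implication on `PropForm`, mirroring `Formula.imp`. -/
def pimp (p q : PropForm) : PropForm := .neg (.and p (.neg q))

lemma derivTautOf {Γ : Set (Formula Ag Pred Conn Act)} (p : PropForm)
    (σ : ℕ → Formula Ag Pred Conn Act) (h : ∀ v, p.eval v = true) :
    Deriv Γ (p.subst σ) := Deriv.taut ⟨p, σ, h, rfl⟩

/- A few concrete propositional tautologies as derivable formulas. -/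

lemma dI {Γ : Set (Formula Ag Pred Conn Act)} (A : Formula Ag Pred Conn Act) :
    Deriv Γ (A.imp A) := by
  have h : ∀ v, (pimp (.var 0) (.var 0)).eval v = true := by
    intro v; simp only [pimp, PropForm.eval]
    cases h0 : v 0 <;> cases h1 : v 1 <;> cases h2 : v 2 <;> cases h3 : v 3 <;> decide
  exact derivTautOf (pimp (.var 0) (.var 0)) (fun _ => A) h

lemma dK {Γ : Set (Formula Ag Pred Conn Act)} (A B : Formula Ag Pred Conn Act) :
    Deriv Γ (A.imp (B.imp A)) := by
  have h : ∀ v, (pimp (.var 0) (pimp (.var 1) (.var 0))).eval v = true := by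
    intro v; simp only [pimp, PropForm.eval]
    cases h0 : v 0 <;> cases h1 : v 1 <;> cases h2 : v 2 <;> cases h3 : v 3 <;> decide
  exact derivTautOf _ (fun n => match n with | 0 => A | _ => B) h

lemma dS {Γ : Set (Formula Ag Pred Conn Act)} (A B C : Formula Ag Pred Conn Act) :
    Deriv Γ ((A.imp (B.imp C)).imp ((A.imp B).imp (A.imp C))) := by
  have h : ∀ v, ((pimp (pimp (.var 0) (pimp (.var 1) (.var 2)))
      (pimp (pimp (.var 0) (.var 1)) (pimp (.var 0) (.var 2))))).eval v = true := by
    intro v; simp only [pimp, PropForm.eval]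
    cases h0 : v 0 <;> cases h1 : v 1 <;> cases h2 : v 2 <;> cases h3 : v 3 <;> decide
  exact derivTautOf _ (fun n => match n with | 0 => A | 1 => B | _ => C) h

lemma dAndL {Γ : Set (Formula Ag Pred Conn Act)} (A B : Formula Ag Pred Conn Act) :
    Deriv Γ ((A.and B).imp A) := by
  have h : ∀ v, (pimp (.and (.var 0) (.var 1)) (.var 0)).eval v = true := by
    intro v; simp only [pimp, PropForm.eval]
    cases h0 : v 0 <;> cases h1 : v 1 <;> cases h2 : v 2 <;> cases h3 : v 3 <;> decide
  exact derivTautOf _ (fun n => match n with | 0 => A | _ => B) h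

lemma dAndR {Γ : Set (Formula Ag Pred Conn Act)} (A B : Formula Ag Pred Conn Act) :
    Deriv Γ ((A.and B).imp B) := by
  have h : ∀ v, (pimp (.and (.var 0) (.var 1)) (.var 1)).eval v = true := by
    intro v; simp only [pimp, PropForm.eval]
    cases h0 : v 0 <;> cases h1 : v 1 <;> cases h2 : v 2 <;> cases h3 : v 3 <;> decide
  exact derivTautOf _ (fun n => match n with | 0 => A | _ => B) h

lemma dAndI {Γ : Set (Formula Ag Pred Conn Act)} (A B : Formula Ag Pred Conn Act) :
    Deriv Γ (A.imp (B.imp (A.and B))) := by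
  have h : ∀ v, (pimp (.var 0) (pimp (.var 1) (.and (.var 0) (.var 1)))).eval v = true := by
    intro v; simp only [pimp, PropForm.eval]
    cases h0 : v 0 <;> cases h1 : v 1 <;> cases h2 : v 2 <;> cases h3 : v 3 <;> decide
  exact derivTautOf _ (fun n => match n with | 0 => A | _ => B) h

lemma dDNE {Γ : Set (Formula Ag Pred Conn Act)} (A : Formula Ag Pred Conn Act) :
    Deriv Γ ((A.neg.neg).imp A) := by
  have h : ∀ v, (pimp (.neg (.neg (.var 0))) (.var 0)).eval v = true := by
    intro v; simp only [pimp, PropForm.eval]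
    cases h0 : v 0 <;> cases h1 : v 1 <;> cases h2 : v 2 <;> cases h3 : v 3 <;> decide
  exact derivTautOf _ (fun _ => A) h

lemma dNegI {Γ : Set (Formula Ag Pred Conn Act)} (A B : Formula Ag Pred Conn Act) :
    Deriv Γ ((A.imp B).imp ((A.imp B.neg).imp A.neg)) := by
  have h : ∀ v, (pimp (pimp (.var 0) (.var 1))
      (pimp (pimp (.var 0) (.neg (.var 1))) (.neg (.var 0)))).eval v = true := by
    intro v; simp only [pimp, PropForm.eval]
    cases h0 : v 0 <;> cases h1 : v 1 <;> cases h2 : v 2 <;> cases h3 : v 3 <;> decide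
  exact derivTautOf _ (fun n => match n with | 0 => A | _ => B) h

lemma dMonoAnd {Γ : Set (Formula Ag Pred Conn Act)} (A B C D : Formula Ag Pred Conn Act) :
    Deriv Γ ((A.imp B).imp ((C.imp D).imp ((A.and C).imp (B.and D)))) := by
  have h : ∀ v, (pimp (pimp (.var 0) (.var 1)) (pimp (pimp (.var 2) (.var 3))
      (pimp (.and (.var 0) (.var 2)) (.and (.var 1) (.var 3))))).eval v = true := by
    intro v; simp only [pimp, PropForm.eval]
    cases h0 : v 0 <;> cases h1 : v 1 <;> cases h2 : v 2 <;> cases h3 : v 3 <;> decide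
  exact derivTautOf _ (fun n => match n with | 0 => A | 1 => B | 2 => C | _ => D) h

/-- Weakening. -/
lemma Deriv.mono : ∀ {Γ : Set (Formula Ag Pred Conn Act)} {φ}, Deriv Γ φ →
    ∀ {Δ}, Γ ⊆ Δ → Deriv Δ φ := by
  intro Γ φ h
  induction h with
  | mem h => exact fun hs => .mem (hs h)
  | taut h => exact fun _ => .taut h
  | a2 Γ i φ ψ => exact fun _ => .a2 _ i φ ψ
  | a4 Γ i φ => exact fun _ => .a4 _ i φ
  | dax Γ i φ => exact fun _ => .dax _ i φ
  | mp _ _ ih1 ih2 => exact fun hs => .mp (ih1 hs) (ih2 hs)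
  | nec Γ i h => exact fun _ => .nec _ i h

lemma derivAndI {Γ : Set (Formula Ag Pred Conn Act)} {A B : Formula Ag Pred Conn Act}
    (h1 : Deriv Γ A) (h2 : Deriv Γ B) : Deriv Γ (A.and B) :=
  .mp (.mp (dAndI A B) h1) h2

/-- The deduction theorem. -/
lemma derivDeductionAux : ∀ {Δ : Set (Formula Ag Pred Conn Act)} {ψ}, Deriv Δ ψ →
    ∀ {Γ : Set (Formula Ag Pred Conn Act)} {ξ}, Δ ⊆ insert ξ Γ → Deriv Γ (ξ.imp ψ) := by
  intro Δ ψ h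
  induction h with
  | @mem _ ψ h =>
      intro Γ ξ hs
      rcases hs h with h' | h'
      · rw [h']; exact dI ξ
      · exact .mp (dK ψ ξ) (.mem h')
  | taut h => exact fun _ => .mp (dK _ _) (.taut h)
  | a2 Γ i φ ψ => exact fun _ => .mp (dK _ _) (.a2 _ i φ ψ)
  | a4 Γ i φ => exact fun _ => .mp (dK _ _) (.a4 _ i φ)
  | dax Γ i φ => exact fun _ => .mp (dK _ _) (.dax _ i φ)
  | mp _ _ ih1 ih2 =>
      intro Γ ξ hs
      exact .mp (.mp (dS _ _ _) (ih1 hs)) (ih2 hs)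
  | nec Γ i h => exact fun _ => .mp (dK _ _) (.nec _ i h)

lemma derivDed {Γ : Set (Formula Ag Pred Conn Act)} {ξ ψ : Formula Ag Pred Conn Act}
    (h : Deriv (insert ξ Γ) ψ) : Deriv Γ (ξ.imp ψ) :=
  derivDeductionAux h (fun _ hx => hx)

lemma impTrans {Γ : Set (Formula Ag Pred Conn Act)} {A B C : Formula Ag Pred Conn Act}
    (h1 : Deriv Γ (A.imp B)) (h2 : Deriv Γ (B.imp C)) : Deriv Γ (A.imp C) := by
  apply derivDed
  have hA : Deriv (insert A Γ) A := .mem (Set.mem_insert _ _)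
  have hsub : Γ ⊆ insert A Γ := Set.subset_insert _ _
  exact .mp (h2.mono hsub) (.mp (h1.mono hsub) hA)

/-- K-distribution: from `⊢ A → B` infer `Γ ⊢ K_i A → K_i B`. -/
lemma kdist {A B : Formula Ag Pred Conn Act} {Γ : Set (Formula Ag Pred Conn Act)} (i : Ag)
    (h : Deriv (∅ : Set (Formula Ag Pred Conn Act)) (A.imp B)) :
    Deriv Γ ((Formula.know i A).imp (Formula.know i B)) := by
  apply derivDed
  have h1 : Deriv (insert (Formula.know i A) Γ) (Formula.know i A) := .mem (Set.mem_insert _ _)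
  have h2 : Deriv (insert (Formula.know i A) Γ) (Formula.know i (A.imp B)) := .nec _ i h
  exact .mp (.a2 _ i A B) (derivAndI h1 h2)

/-- If all members of a finite set `Δ` are known by `i` (over `Θ`) and `Δ ⊢ β`,
then `Θ ⊢ K_i β`. -/
lemma derivKnowOfKB [DecidableEq (Formula Ag Pred Conn Act)] (i : Ag)
    {Θ : Set (Formula Ag Pred Conn Act)} :
    ∀ (Δ : Finset (Formula Ag Pred Conn Act)) (β : Formula Ag Pred Conn Act),
      Deriv (↑Δ : Set (Formula Ag Pred Conn Act)) β →
      (∀ γ ∈ Δ, Deriv Θ (Formula.know i γ)) → Deriv Θ (Formula.know i β) := by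
  intro Δ
  induction Δ using Finset.induction_on with
  | empty =>
      intro β h _
      have : Deriv (∅ : Set (Formula Ag Pred Conn Act)) β := by simpa using h
      exact .nec _ i this
  | @insert γ Δ hγ ih =>
      intro β h hk
      rw [Finset.coe_insert] at h
      have h1 : Deriv (↑Δ : Set (Formula Ag Pred Conn Act)) (γ.imp β) := derivDed h
      have h2 : Deriv Θ (Formula.know i (γ.imp β)) :=
        ih _ h1 (fun δ hδ => hk δ (Finset.mem_insert_of_mem hδ))
      have h3 : Deriv Θ (Formula.know i γ) := hk γ (Finset.mem_insert_self _ _)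
      exact .mp (.a2 _ i γ β) (derivAndI h3 h2)

/-- Subformula list. -/
def subL : Formula Ag Pred Conn Act → List (Formula Ag Pred Conn Act)
  | .atom p => [.atom p]
  | .conn m i j => [.conn m i j]
  | .act n i j => [.act n i j]
  | .neg φ => .neg φ :: subL φ
  | .and φ ψ => .and φ ψ :: (subL φ ++ subL ψ)
  | .know i φ => .know i φ :: subL φ

lemma self_mem_subL : ∀ φ : Formula Ag Pred Conn Act, φ ∈ subL φ := by
  intro φ; cases φ <;> simp [subL]

lemma subL_closed : ∀ (ρ ξ : Formula Ag Pred Conn Act), ξ ∈ subL ρ → subL ξ ⊆ subL ρ := by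
  intro ρ
  induction ρ with
  | atom p => intro ξ h; simp [subL] at h; subst h; exact fun x hx => hx
  | conn m i j => intro ξ h; simp [subL] at h; subst h; exact fun x hx => hx
  | act n i j => intro ξ h; simp [subL] at h; subst h; exact fun x hx => hx
  | neg φ ih =>
      intro ξ h
      rcases (by simpa [subL] using h : ξ = Formula.neg φ ∨ ξ ∈ subL φ) with h | h
      · subst h; exact fun x hx => hx
      · exact fun x hx => List.mem_cons_of_mem _ (ih ξ h hx)
  | and φ ψ ih1 ih2 =>
      intro ξ h
      rcases (by simpa [subL] using h : ξ = Formula.and φ ψ ∨ ξ ∈ subL φ ∨ ξ ∈ subL ψ) with h | h | h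
      · subst h; exact fun x hx => hx
      · exact fun x hx => List.mem_cons_of_mem _ (List.mem_append_left _ (ih1 ξ h hx))
      · exact fun x hx => List.mem_cons_of_mem _ (List.mem_append_right _ (ih2 ξ h hx))
  | know i φ ih =>
      intro ξ h
      rcases (by simpa [subL] using h : ξ = Formula.know i φ ∨ ξ ∈ subL φ) with h | h
      · subst h; exact fun x hx => hx
      · exact fun x hx => List.mem_cons_of_mem _ (ih ξ h hx)

/-- Finite Lindenbaum lemma. -/
lemma lindenbaum [DecidableEq (Formula Ag Pred Conn Act)]
    (S Δ0 : Finset (Formula Ag Pred Conn Act)) (hsub : Δ0 ⊆ S)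
    (hcons : SetKD4Consistent (↑Δ0 : Set (Formula Ag Pred Conn Act))) :
    ∃ Θ : Finset (Formula Ag Pred Conn Act), Δ0 ⊆ Θ ∧ Θ ⊆ S ∧
      SetKD4Consistent (↑Θ : Set (Formula Ag Pred Conn Act)) ∧
      ∀ ξ ∈ S, ξ ∉ Θ →
        ¬ SetKD4Consistent (insert ξ (↑Θ : Set (Formula Ag Pred Conn Act))) := by
  classical
  set T : Finset (Finset (Formula Ag Pred Conn Act)) :=
    S.powerset.filter
      (fun Θ => Δ0 ⊆ Θ ∧ SetKD4Consistent (↑Θ : Set (Formula Ag Pred Conn Act))) with hT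
  have hne : T.Nonempty := ⟨Δ0, by simp [hT, Finset.mem_filter, Finset.mem_powerset, hsub, hcons]⟩
  obtain ⟨Θ, hΘT, hmax⟩ := T.exists_max_image Finset.card hne
  rw [hT, Finset.mem_filter, Finset.mem_powerset] at hΘT
  refine ⟨Θ, hΘT.2.1, hΘT.1, hΘT.2.2, ?_⟩
  intro ξ hξS hξΘ hcons'
  have hmem : insert ξ Θ ∈ T := by
    rw [hT, Finset.mem_filter, Finset.mem_powerset]
    refine ⟨Finset.insert_subset hξS hΘT.1, hΘT.2.1.trans (Finset.subset_insert _ _), ?_⟩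
    rwa [Finset.coe_insert] at *
  have hcard := hmax _ hmem
  have : Θ.card < (insert ξ Θ).card := by
    rw [Finset.card_insert_of_notMem hξΘ]; omega
  omega

/-- Semantic validity over all SNMs implies KD4-derivability from no assumptions. -/
lemma validImpliesProvable (θ : Formula Ag Pred Conn Act)
    (hval : ∀ SN : SNM Ag Pred Conn Act, SN.Sat θ) :
    Deriv (∅ : Set (Formula Ag Pred Conn Act)) θ := by
  classical
  by_contra hnd
  set ρ : Formula Ag Pred Conn Act := θ.neg with hρ
  -- {ρ} is consistent
  have hcons0 : SetKD4Consistent (↑({ρ} : Finset (Formula Ag Pred Conn Act)) :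
      Set (Formula Ag Pred Conn Act)) := by
    rintro ψ ⟨h1, h2⟩
    have e : (↑({ρ} : Finset (Formula Ag Pred Conn Act)) : Set (Formula Ag Pred Conn Act))
        = insert ρ (∅ : Set (Formula Ag Pred Conn Act)) := by simp
    rw [e] at h1 h2
    have i1 := derivDed h1
    have i2 := derivDed h2
    have : Deriv (∅ : Set (Formula Ag Pred Conn Act)) ρ.neg := .mp (.mp (dNegI ρ ψ) i1) i2
    exact hnd (.mp (dDNE θ) this)
  set S : Finset (Formula Ag Pred Conn Act) :=
    ((subL ρ) ++ (subL ρ).map Formula.neg).toFinset with hS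
  have hsub0 : ({ρ} : Finset (Formula Ag Pred Conn Act)) ⊆ S := by
    intro x hx
    simp only [Finset.mem_singleton] at hx
    subst hx
    simp [hS, List.mem_toFinset]
    exact Or.inl (self_mem_subL ρ)
  obtain ⟨Θ, hΔ0, hΘS, hcons, hmax⟩ := lindenbaum S {ρ} hsub0 hcons0
  -- closure under derivability (for members of S)
  have hC2 : ∀ ξ ∈ S, Deriv (↑Θ : Set (Formula Ag Pred Conn Act)) ξ → ξ ∈ Θ := by
    intro ξ hξS hder
    by_contra hni
    apply hmax ξ hξS hni
    rintro ψ ⟨h1, h2⟩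
    have i1 := derivDed h1
    have i2 := derivDed h2
    exact hcons ψ ⟨.mp i1 hder, .mp i2 hder⟩
  have hsubS : ∀ ξ ∈ subL ρ, ξ ∈ S := by
    intro ξ h; simp [hS, List.mem_toFinset]; exact Or.inl h
  have hnegS : ∀ ξ ∈ subL ρ, Formula.neg ξ ∈ S := by
    intro ξ h; simp [hS, List.mem_toFinset]; exact Or.inr h
  -- negation completeness on subL ρ
  have hC3 : ∀ ξ ∈ subL ρ, ξ ∈ Θ ∨ Formula.neg ξ ∈ Θ := by
    intro ξ hξ
    by_contra hn
    push_neg at hn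
    have hni1 := hmax ξ (hsubS ξ hξ) hn.1
    have hni2 := hmax ξ.neg (hnegS ξ hξ) hn.2
    rw [SetKD4Consistent, not_forall] at hni1 hni2
    obtain ⟨ψ1, hψ1⟩ := hni1
    obtain ⟨ψ2, hψ2⟩ := hni2
    rw [not_not] at hψ1 hψ2
    have j1 : Deriv (↑Θ : Set (Formula Ag Pred Conn Act)) ξ.neg :=
      .mp (.mp (dNegI ξ ψ1) (derivDed hψ1.1)) (derivDed hψ1.2)
    have j2 : Deriv (↑Θ : Set (Formula Ag Pred Conn Act)) ξ.neg.neg :=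
      .mp (.mp (dNegI ξ.neg ψ2) (derivDed hψ2.1)) (derivDed hψ2.2)
    exact hcons ξ.neg ⟨j1, j2⟩
  -- membership in Θ implies membership in subL ρ for non-negations-of-subformulas:
  have hΘmem : ∀ ξ ∈ Θ, ξ ∈ S := fun ξ h => hΘS h
  -- the model
  set SN0 : SNM Ag Pred Conn Act :=
    { conn := fun m i j => Formula.conn m i j ∈ Θ
      act := fun n i j => Formula.act n i j ∈ Θ
      KB := fun i => ((subL ρ).toFinset).filter (fun β => Formula.know i β ∈ Θ)
      KBe := Θ.biUnion (fun ξ => match ξ with | .atom p => {p} | _ => (∅ : Finset Pred)) }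
    with hSN0
  have truth : ∀ ξ : Formula Ag Pred Conn Act, ξ ∈ subL ρ → (SN0.Sat ξ ↔ ξ ∈ Θ) := by
    intro ξ
    induction ξ with
    | atom p =>
        intro _
        show p ∈ SN0.KBe ↔ _
        simp only [hSN0, Finset.mem_biUnion]
        constructor
        · rintro ⟨a, ha, hpa⟩
          cases a <;> simp_all
        · intro h; exact ⟨_, h, by simp⟩
    | conn m i j => intro _; exact Iff.rfl
    | act n i j => intro _; exact Iff.rfl
    | neg ξ' ih =>
        intro hmem
        have hξ' : ξ' ∈ subL ρ :=
          subL_closed ρ _ hmem (List.mem_cons_of_mem _ (self_mem_subL ξ'))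
        have iih := ih hξ'
        show (¬ SN0.Sat ξ') ↔ _
        rw [iih]
        constructor
        · intro h
          rcases hC3 ξ' hξ' with h' | h'
          · exact absurd h' h
          · exact h'
        · intro h h'
          exact hcons ξ' ⟨.mem h', .mem h⟩
    | and ξ1 ξ2 ih1 ih2 =>
        intro hmem
        have h1 : ξ1 ∈ subL ρ :=
          subL_closed ρ _ hmem (List.mem_cons_of_mem _
            (List.mem_append_left _ (self_mem_subL ξ1)))
        have h2 : ξ2 ∈ subL ρ :=
          subL_closed ρ _ hmem (List.mem_cons_of_mem _
            (List.mem_append_right _ (self_mem_subL ξ2)))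
        show (SN0.Sat ξ1 ∧ SN0.Sat ξ2) ↔ _
        rw [ih1 h1, ih2 h2]
        constructor
        · rintro ⟨m1, m2⟩
          exact hC2 _ (hsubS _ hmem) (derivAndI (.mem m1) (.mem m2))
        · intro h
          exact ⟨hC2 _ (hsubS _ h1) (.mp (dAndL ξ1 ξ2) (.mem h)),
                 hC2 _ (hsubS _ h2) (.mp (dAndR ξ1 ξ2) (.mem h))⟩
    | know i β _ =>
        intro hmem
        have hβ : β ∈ subL ρ :=
          subL_closed ρ _ hmem (List.mem_cons_of_mem _ (self_mem_subL β))
        show Deriv (↑(SN0.KB i) : Set (Formula Ag Pred Conn Act)) β ↔ _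
        constructor
        · intro h
          apply hC2 _ (hsubS _ hmem)
          apply derivKnowOfKB i (SN0.KB i) β h
          intro γ hγ
          simp only [hSN0, Finset.mem_filter] at hγ
          exact .mem hγ.2
        · intro h
          apply Deriv.mem
          simp only [hSN0, Finset.coe_filter, List.mem_toFinset, Set.mem_setOf_eq]
          exact ⟨hβ, h⟩
  have hρΘ : ρ ∈ Θ := hΔ0 (Finset.mem_singleton_self ρ)
  have hsatρ : SN0.Sat ρ := (truth ρ (self_mem_subL ρ)).mpr hρΘ
  exact hsatρ (hval SN0)

/-- Satisfaction of a `foldl`-conjunction. -/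
lemma sat_foldl (SN : SNM Ag Pred Conn Act) :
    ∀ (L : List (Formula Ag Pred Conn Act)) (x : Formula Ag Pred Conn Act),
      SN.Sat (L.foldl Formula.and x) ↔ (SN.Sat x ∧ ∀ f ∈ L, SN.Sat f) := by
  intro L
  induction L with
  | nil => intro x; simp
  | cons f L ih =>
      intro x
      rw [List.foldl_cons, ih]
      have : SN.Sat (x.and f) ↔ SN.Sat x ∧ SN.Sat f := Iff.rfl
      rw [this]
      constructor
      · rintro ⟨⟨hx, hf⟩, hL⟩
        refine ⟨hx, ?_⟩
        intro g hg
        rcases List.mem_cons.mp hg with rfl | hg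
        · exact hf
        · exact hL g hg
      · rintro ⟨hx, hL⟩
        exact ⟨⟨hx, hL f (List.mem_cons_self (a := f) (l := L))⟩, fun g hg => hL g (List.mem_cons_of_mem _ hg)⟩

lemma sat_EG (SN : SNM Ag Pred Conn Act) (a : Ag) (l : List Ag)
    (δ : Formula Ag Pred Conn Act) :
    SN.Sat (EG a l δ) ↔ ∀ i ∈ a :: l, Deriv (↑(SN.KB i) : Set (Formula Ag Pred Conn Act)) δ := by
  unfold EG
  rw [sat_foldl]
  constructor
  · rintro ⟨ha, hl⟩ i hi
    rcases List.mem_cons.mp hi with rfl | hi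
    · exact ha
    · exact hl _ (List.mem_map.mpr ⟨i, hi, rfl⟩)
  · intro h
    refine ⟨h a List.mem_cons_self, ?_⟩
    intro f hf
    obtain ⟨i, hi, rfl⟩ := List.mem_map.mp hf
    exact h i (List.mem_cons_of_mem _ hi)

lemma eg_mono {a : Ag} {l : List Ag} {α β : Formula Ag Pred Conn Act}
    (h : Deriv (∅ : Set (Formula Ag Pred Conn Act)) (α.imp β)) :
    Deriv (∅ : Set (Formula Ag Pred Conn Act)) ((EG a l α).imp (EG a l β)) := by
  unfold EG
  have H : ∀ (L : List Ag) (x y : Formula Ag Pred Conn Act),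
      Deriv (∅ : Set (Formula Ag Pred Conn Act)) (x.imp y) →
      Deriv (∅ : Set (Formula Ag Pred Conn Act))
        (((L.map fun i => Formula.know i α).foldl Formula.and x).imp
         ((L.map fun i => Formula.know i β).foldl Formula.and y)) := by
    intro L
    induction L with
    | nil => intro x y hxy; simpa using hxy
    | cons i L ih =>
        intro x y hxy
        simp only [List.map_cons, List.foldl_cons]
        apply ih
        exact .mp (.mp (dMonoAnd x y (Formula.know i α) (Formula.know i β)) hxy) (kdist i h)
  exact H l _ _ (kdist a h)

lemma egiter_mono {a : Ag} {l : List Ag} {α β : Formula Ag Pred Conn Act}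
    (h : Deriv (∅ : Set (Formula Ag Pred Conn Act)) (α.imp β)) :
    ∀ k, Deriv (∅ : Set (Formula Ag Pred Conn Act))
      ((EGiter a l k α).imp (EGiter a l k β))
  | 0 => h
  | k + 1 => eg_mono (egiter_mono h k)

lemma chi_iter {a : Ag} {l : List Ag} {φ χ : Formula Ag Pred Conn Act}
    (hφE : Deriv (∅ : Set (Formula Ag Pred Conn Act)) (φ.imp (EG a l χ)))
    (hχφ : Deriv (∅ : Set (Formula Ag Pred Conn Act)) (χ.imp φ)) :
    ∀ k, Deriv (∅ : Set (Formula Ag Pred Conn Act)) (χ.imp (EGiter a l k χ))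
  | 0 => dI χ
  | k + 1 => impTrans (impTrans hχφ hφE) (eg_mono (chi_iter hφE hχφ k))

end RC1Aux

/-- soundness of the common-knowledge induction rule RC1 w.r.t.
SNMs: if `SN' ⊨ φ → E_G (ψ ∧ φ)` holds for every SNM `SN'`, then every SNM
satisfying `φ` satisfies `C_G ψ`, i.e. `E^k_G ψ` for every `k ≥ 1`. -/
theorem ruleRC1_sound
    {Ag Pred Conn Act : Type} (a : Ag) (l : List Ag) (hG : (a :: l).Nodup)
    (φ ψ : Formula Ag Pred Conn Act)
    (hprem : ∀ SN' : SNM Ag Pred Conn Act,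
      SN'.Sat (Formula.imp φ (EG a l (Formula.and ψ φ)))) :
    ∀ SN : SNM Ag Pred Conn Act, SN.Sat φ →
      ∀ k : ℕ, 1 ≤ k → SN.Sat (EGiter a l k ψ) := by
  classical
  have hval : Deriv (∅ : Set (Formula Ag Pred Conn Act))
      (Formula.imp φ (EG a l (Formula.and ψ φ))) := validImpliesProvable _ hprem
  intro SN hφ k hk
  obtain ⟨m, rfl⟩ : ∃ m, k = m + 1 := ⟨k - 1, by omega⟩
  have hrw : EGiter a l (m+1) ψ = EG a l (EGiter a l m ψ) := rfl
  rw [hrw, sat_EG]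
  intro i hi
  have hsat := hprem SN
  have hEχ : SN.Sat (EG a l (Formula.and ψ φ)) := by
    by_contra hn
    exact hsat ⟨hφ, hn⟩
  have hχi : Deriv (↑(SN.KB i) : Set (Formula Ag Pred Conn Act)) (Formula.and ψ φ) :=
    (sat_EG SN a l _).mp hEχ i hi
  have h1 := chi_iter hval (dAndR ψ φ) m
  have h2 := egiter_mono (a := a) (l := l) (dAndL ψ φ) m
  exact .mp ((impTrans h1 h2).mono (Set.empty_subset _)) hχi
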